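/- Let $F$ be a number field that is not totally real, with a fixed nonreal embedding $\tau : F \to \mathbb{C}$, and let real numbers $\theta$ and $\epsilon > 0$ and $M > 0$ be given. Then there exists $x \in F$ such that $|\sigma(x)| < \epsilon$ for every embedding $\sigma : F \to \mathbb{C}$ with $\sigma \neq \tau$ and $\sigma \neq \bar{\tau}$, while $|\tau(x)| > M$ and the argument of $\tau(x)$ lies within $\epsilon$ of $\theta$. -/

import Mathlib

open NumberField NumberField.mixedEmbedding Module

open scoped Classical in
lemma approxA (K : Type*) [Field K] [NumberField K] (y : mixedSpace K) {δ : ℝ} (hδ : 0 < δ) :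
    ∃ x : K, ‖NumberField.mixedEmbedding K x - y‖ < δ := by
  classical
  set b := mixedEmbedding.latticeBasis K with hb
  have hne : Nonempty (Free.ChooseBasisIndex ℤ (𝓞 K)) := b.index_nonempty
  set n : ℕ := Fintype.card (Free.ChooseBasisIndex ℤ (𝓞 K)) with hn
  have hn0 : 0 < (n : ℝ) := by exact_mod_cast Fintype.card_pos
  set c := b.repr y with hc
  have hq : ∀ i, ∃ q : ℚ, |c i - (q : ℝ)| < δ / (n * (‖b i‖ + 1)) := by
    intro i
    refine exists_rat_near (c i) ?_
    have : 0 < ‖b i‖ + 1 := by positivity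
    positivity
  choose q hq using hq
  refine ⟨∑ i, q i • (integralBasis K i), ?_⟩
  have hsm : ∀ (e : mixedSpace K) (r : ℚ), (r : ℝ) • e = r • e := by
    intro e r
    rw [ratCast_smul_eq ℝ ℚ]
    norm_num
  have hmap : NumberField.mixedEmbedding K (∑ i, q i • (integralBasis K i))
      = ∑ i, ((q i : ℝ)) • b i := by
    rw [map_sum]
    refine Finset.sum_congr rfl fun i _ ↦ ?_
    rw [map_rat_smul (NumberField.mixedEmbedding K), hsm,
      mixedEmbedding.latticeBasis_apply]
  have hy : y = ∑ i, c i • b i := (b.sum_repr y).symm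
  rw [hmap]
  nth_rewrite 1 [hy]
  rw [← Finset.sum_sub_distrib]
  simp_rw [← sub_smul]
  calc ‖∑ i, ((q i : ℝ) - c i) • b i‖ ≤ ∑ i, ‖((q i : ℝ) - c i) • b i‖ := norm_sum_le _ _
    _ < ∑ _i, δ / n := by
        refine Finset.sum_lt_sum_of_nonempty Finset.univ_nonempty (fun i _ ↦ ?_)
        rw [_root_.norm_smul, Real.norm_eq_abs, abs_sub_comm]
        have hB : (0:ℝ) < ‖b i‖ + 1 := by positivity
        calc |c i - (q i : ℝ)| * ‖b i‖ ≤ |c i - (q i : ℝ)| * (‖b i‖ + 1) := by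
              have := abs_nonneg (c i - (q i : ℝ)); nlinarith
          _ < (δ / (n * (‖b i‖ + 1))) * (‖b i‖ + 1) :=
              mul_lt_mul_of_pos_right (hq i) hB
          _ = δ / n := by field_simp
    _ = δ := by
        rw [Finset.sum_const, Finset.card_univ, ← hn, nsmul_eq_mul]
        field_simp

lemma keyB (θ ε M : ℝ) (hε : 0 < ε) (hM : 0 < M) :
    ∃ δ : ℝ, 0 < δ ∧ ∀ z : ℂ,
      ‖z - ((2*M : ℝ) : ℂ) * Complex.exp ((θ : ℂ) * Complex.I)‖ < δ →
      M < ‖z‖ ∧ ∃ θ' : ℝ, |θ' - θ| < ε ∧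
        z = (‖z‖ : ℂ) * Complex.exp ((θ' : ℂ) * Complex.I) := by
  refine ⟨min M (M * ε / 2), by positivity, fun z hz ↦ ?_⟩
  set w : ℂ := z * Complex.exp (-(θ:ℂ) * Complex.I) with hw
  have hexp1 : Complex.exp ((θ:ℂ) * Complex.I) * Complex.exp (-(θ:ℂ) * Complex.I) = 1 := by
    rw [← Complex.exp_add, show (θ:ℂ) * Complex.I + -(θ:ℂ) * Complex.I = 0 by ring,
      Complex.exp_zero]
  have habs_e : ‖Complex.exp (-(θ:ℂ) * Complex.I)‖ = 1 := by
    rw [show -(θ:ℂ) * Complex.I = ((-θ : ℝ) : ℂ) * Complex.I by push_cast; ring,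
      Complex.norm_exp_ofReal_mul_I]
  have hwsub : w - ((2*M : ℝ) : ℂ)
      = (z - ((2*M : ℝ) : ℂ) * Complex.exp ((θ:ℂ) * Complex.I)) *
        Complex.exp (-(θ:ℂ) * Complex.I) := by
    rw [hw, sub_mul, mul_assoc, hexp1, mul_one]
  have habs : ‖w - ((2*M : ℝ) : ℂ)‖ < min M (M * ε / 2) := by
    rw [hwsub, norm_mul, habs_e, mul_one]; exact hz
  have habsw_z : ‖w‖ = ‖z‖ := by
    rw [hw, norm_mul, habs_e, mul_one]
  have hre : |w.re - 2*M| ≤ ‖w - ((2*M : ℝ) : ℂ)‖ := by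
    have := Complex.abs_re_le_norm (w - ((2*M : ℝ) : ℂ))
    simpa using this
  have him : |w.im| ≤ ‖w - ((2*M : ℝ) : ℂ)‖ := by
    have := Complex.abs_im_le_norm (w - ((2*M : ℝ) : ℂ))
    simpa using this
  have hminM : min M (M * ε / 2) ≤ M := min_le_left _ _
  have hminE : min M (M * ε / 2) ≤ M * ε / 2 := min_le_right _ _
  have hrepos : M < w.re := by
    have := abs_lt.mp (lt_of_le_of_lt hre habs)
    have h1 := this.1
    linarith [hminM]
  have himlt : |w.im| < M * ε / 2 := lt_of_lt_of_le (lt_of_le_of_lt him habs) hminE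
  have habsw : M < ‖w‖ :=
    lt_of_lt_of_le hrepos ((Complex.re_le_norm w).trans (le_refl _))
  have habsw0 : 0 < ‖w‖ := hM.trans habsw
  refine ⟨habsw_z ▸ habsw, θ + Complex.arg w, ?_, ?_⟩
  · -- |arg w| < ε
    have hargle : |Complex.arg w| < Real.pi / 2 :=
      Complex.abs_arg_lt_pi_div_two_iff.mpr (Or.inl (by linarith))
    have hsin : Real.sin (Complex.arg w) = w.im / ‖w‖ := Complex.sin_arg w
    have hkey : 2 / Real.pi * |Complex.arg w| ≤ |w.im| / ‖w‖ := by
      rcases le_or_gt 0 (Complex.arg w) with h | h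
      · rw [abs_of_nonneg h]
        calc 2 / Real.pi * Complex.arg w ≤ Real.sin (Complex.arg w) :=
              Real.mul_le_sin h (by rw [abs_of_nonneg h] at hargle; linarith)
          _ = w.im / ‖w‖ := hsin
          _ ≤ |w.im| / ‖w‖ := by
              gcongr
              exact le_abs_self _
      · rw [abs_of_neg h]
        calc 2 / Real.pi * -Complex.arg w ≤ Real.sin (-Complex.arg w) :=
              Real.mul_le_sin (by linarith) (by rw [abs_of_neg h] at hargle; linarith)
          _ = -(w.im / ‖w‖) := by rw [Real.sin_neg, hsin]
          _ ≤ |w.im| / ‖w‖ := by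
              rw [← neg_div]
              gcongr
              exact neg_le_abs _
    have h1 : |w.im| / ‖w‖ < ε / 2 := by
      rw [div_lt_iff₀ habsw0]
      nlinarith
    have hpi := Real.pi_pos
    have hmm := mul_le_mul_of_nonneg_left hkey (by positivity : (0:ℝ) ≤ Real.pi / 2)
    have h3 : Real.pi / 2 * (2 / Real.pi * |Complex.arg w|) = |Complex.arg w| := by
      field_simp
    have : |Complex.arg w| ≤ Real.pi / 2 * (|w.im| / ‖w‖) := by
      rw [← h3]; exact hmm
    have : |Complex.arg w| < Real.pi / 2 * (ε / 2) := by
      refine lt_of_le_of_lt this ?_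
      exact mul_lt_mul_of_pos_left h1 (by positivity)
    have hpilt : Real.pi < 3.15 := Real.pi_lt_d2

    simp only [add_sub_cancel_left]
    nlinarith
  · -- z = |z| exp(θ' I)
    have hz' : z = w * Complex.exp ((θ:ℂ) * Complex.I) := by
      rw [hw, mul_assoc, mul_comm (Complex.exp _) (Complex.exp _), hexp1, mul_one]
    have harg := Complex.norm_mul_exp_arg_mul_I w
    have habs3 : ‖w * Complex.exp ((θ:ℂ) * Complex.I)‖ = ‖w‖ := by
      rw [norm_mul, show (θ:ℂ) * Complex.I = ((θ : ℝ) : ℂ) * Complex.I from rfl,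
        Complex.norm_exp_ofReal_mul_I, mul_one]
    have hθ'I : ((θ + Complex.arg w : ℝ) : ℂ) * Complex.I
        = (Complex.arg w : ℂ) * Complex.I + (θ:ℂ) * Complex.I := by push_cast; ring
    rw [hz', habs3, hθ'I, Complex.exp_add, ← mul_assoc, harg]

open NumberField.InfinitePlace

theorem stmt_17 (F : Type*) [Field F] [NumberField F]
    (τ : F →+* ℂ) (hτ : ∃ x : F, (τ x).im ≠ 0)
    (θ ε M : ℝ) (hε : 0 < ε) (hM : 0 < M) :
    ∃ x : F,
      (∀ σ : F →+* ℂ, σ ≠ τ → σ ≠ (starRingEnd ℂ).comp τ → ‖σ x‖ < ε) ∧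
      M < ‖τ x‖ ∧
      ∃ θ' : ℝ, |θ' - θ| < ε ∧
        τ x = (‖τ x‖ : ℂ) * Complex.exp (θ' * Complex.I) := by
  classical
  have hτc : ¬ ComplexEmbedding.IsReal τ := by
    intro h
    obtain ⟨x, hx⟩ := hτ
    have h2 := RingHom.congr_fun (ComplexEmbedding.isReal_iff.mp h) x
    rw [ComplexEmbedding.conjugate_coe_eq] at h2
    exact hx (Complex.conj_eq_iff_im.mp h2)
  have hconj_eq : ComplexEmbedding.conjugate τ = (starRingEnd ℂ).comp τ := by
    ext x; rfl
  set wτ : InfinitePlace F := InfinitePlace.mk τ with hwτ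
  have hwc : wτ.IsComplex := isComplex_mk_iff.mpr hτc
  obtain ⟨δ, hδ0, hδ⟩ := keyB θ ε M hε hM
  set δ' := min δ ε with hδ'def
  have hδ'0 : 0 < δ' := lt_min hδ0 hε
  set T : ℂ := ((2*M : ℝ) : ℂ) * Complex.exp ((θ:ℂ) * Complex.I) with hT
  set z₀ : ℂ := if InfinitePlace.embedding wτ = τ then T else (starRingEnd ℂ) T with hz₀
  set y : mixedSpace F :=
    (0, fun w : {w : InfinitePlace F // IsComplex w} => if w = ⟨wτ, hwc⟩ then z₀ else 0) with hy
  obtain ⟨x, hx⟩ := approxA F y hδ'0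
  set v := NumberField.mixedEmbedding F x with hv
  have hyτ : y.2 ⟨wτ, hwc⟩ = z₀ := if_pos rfl
  -- closeness at the place of τ
  have hclose : ‖v.2 ⟨wτ, hwc⟩ - z₀‖ < δ' := by
    have h1 : v.2 ⟨wτ, hwc⟩ - z₀ = (v - y).2 ⟨wτ, hwc⟩ := by
      rw [show (v - y).2 ⟨wτ, hwc⟩ = v.2 ⟨wτ, hwc⟩ - y.2 ⟨wτ, hwc⟩ from rfl, hyτ]
    rw [h1]
    calc ‖(v - y).2 ⟨wτ, hwc⟩‖ = ‖(v - y).2 ⟨wτ, hwc⟩‖ := rfl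
      _ ≤ ‖(v - y).2‖ := norm_le_pi_norm _ _
      _ ≤ ‖v - y‖ := norm_snd_le _
      _ < δ' := hx
  have hcoord : v.2 ⟨wτ, hwc⟩ = (InfinitePlace.embedding wτ) x :=
    mixedEmbedding_apply_isComplex F x ⟨wτ, hwc⟩
  have hτx : ‖τ x - T‖ < δ := by
    rcases embedding_mk_eq τ with he | he
    · have hif : z₀ = T := if_pos (by rw [hwτ]; exact he)
      have : τ x = v.2 ⟨wτ, hwc⟩ := by rw [hcoord, hwτ, he]
      rw [this, ← hif]
      exact lt_of_lt_of_le hclose (min_le_left _ _)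
    · have hne : InfinitePlace.embedding wτ ≠ τ := by
        intro hcontra
        exact hτc (ComplexEmbedding.isReal_iff.mpr (by rw [← he]; exact hcontra))
      have hif : z₀ = (starRingEnd ℂ) T := if_neg hne
      have hcc : v.2 ⟨wτ, hwc⟩ = (starRingEnd ℂ) (τ x) := by
        rw [hcoord, hwτ, he]; rfl
      have : ‖τ x - T‖
          = ‖v.2 ⟨wτ, hwc⟩ - z₀‖ := by
        rw [hcc, hif, ← map_sub, Complex.norm_conj]
      rw [this]
      exact lt_of_lt_of_le hclose (min_le_left _ _)
  obtain ⟨hM', θ', hθ'1, hθ'2⟩ := hδ (τ x) hτx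
  refine ⟨x, ?_, hM', θ', hθ'1, hθ'2⟩
  intro σ h1 h2
  have hmkne : InfinitePlace.mk σ ≠ wτ := by
    intro h
    rcases mk_eq_iff.mp h with h' | h'
    · exact h1 h'
    · refine h2 (RingHom.ext fun a => ?_)
      have h3 := RingHom.congr_fun h' a
      rw [ComplexEmbedding.conjugate_coe_eq] at h3
      rw [RingHom.comp_apply, ← h3, Complex.conj_conj]
  have hy0 : mixedEmbedding.normAtPlace (InfinitePlace.mk σ) y = 0 := by
    rcases (InfinitePlace.mk σ).isReal_or_isComplex with h | h
    · rw [mixedEmbedding.normAtPlace_apply_of_isReal h]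
      simp [hy]
    · rw [mixedEmbedding.normAtPlace_apply_of_isComplex h]
      have : y.2 ⟨InfinitePlace.mk σ, h⟩ = 0 :=
        if_neg (fun hcontra => hmkne (congrArg Subtype.val hcontra))
      rw [this, norm_zero]
  have habs : ‖σ x‖ = mixedEmbedding.normAtPlace (InfinitePlace.mk σ) v := by
    rw [hv, mixedEmbedding.normAtPlace_apply]
    rfl
  rw [habs]
  calc mixedEmbedding.normAtPlace (InfinitePlace.mk σ) v
      = mixedEmbedding.normAtPlace (InfinitePlace.mk σ) ((v - y) + y) := by rw [sub_add_cancel]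
    _ ≤ mixedEmbedding.normAtPlace (InfinitePlace.mk σ) (v - y)
        + mixedEmbedding.normAtPlace (InfinitePlace.mk σ) y :=
          mixedEmbedding.normAtPlace_add_le _ _ _
    _ = mixedEmbedding.normAtPlace (InfinitePlace.mk σ) (v - y) := by rw [hy0, add_zero]
    _ ≤ ‖v - y‖ := by
        rw [mixedEmbedding.norm_eq_sup'_normAtPlace]
        exact Finset.le_sup' (fun w => mixedEmbedding.normAtPlace w (v - y))
          (Finset.mem_univ _)
    _ < δ' := hx
    _ ≤ ε := min_le_right _ _
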